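/- The bound 3/2 in the previous sufficiency result cannot be improved: for every e < 3/2, a single agent located at the point 1/2 with energy e cannot explore the segment [0,1]. Precisely, for every T ≥ 0 and every continuous function f : [0,T] → ℝ with f(0) = 1/2 whose total variation on [0,T] is less than 3/2, the image f([0,T]) does not contain [0,1]. -/

import Mathlib

/-- Helper: if `x ≤ y ≤ z` all lie in `s`, then
`edist (f y) (f x) + edist (f z) (f y) ≤ eVariationOn f s`. -/
lemma evar_lower_bound (f : ℝ → ℝ) (s : Set ℝ) (x y z : ℝ)
    (hx : x ∈ s) (hy : y ∈ s) (hz : z ∈ s) (hxy : x ≤ y) (hyz : y ≤ z) :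
    edist (f y) (f x) + edist (f z) (f y) ≤ eVariationOn f s := by
  set u : ℕ → ℝ := fun n => match n with | 0 => x | 1 => y | _ => z with hu
  have hmono : Monotone u := by
    apply monotone_nat_of_le_succ
    intro n
    match n with
    | 0 => exact hxy
    | 1 => exact hyz
    | (n+2) => exact le_refl z
  have hmem : ∀ i, u i ∈ s := by
    intro i
    match i with
    | 0 => exact hx
    | 1 => exact hy
    | (n+2) => exact hz
  have := eVariationOn.sum_le (f := f) (n := 2) hmono hmem
  simpa [Finset.sum_range_succ, hu] using this

theorem single_agent_needs_three_halves
    (T : ℝ) (hT : 0 ≤ T) (f : ℝ → ℝ)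
    (hcont : ContinuousOn f (Set.Icc 0 T)) (h0 : f 0 = 1 / 2)
    (hvar : eVariationOn f (Set.Icc 0 T) < ENNReal.ofReal (3 / 2)) :
    ¬ Set.Icc (0 : ℝ) 1 ⊆ f '' Set.Icc 0 T := by
  intro hsub
  obtain ⟨a, ha, hfa⟩ := hsub (Set.mem_Icc.mpr ⟨le_refl 0, zero_le_one⟩)
  obtain ⟨b, hb, hfb⟩ := hsub (Set.mem_Icc.mpr ⟨zero_le_one, le_refl 1⟩)
  have h0mem : (0:ℝ) ∈ Set.Icc (0:ℝ) T := Set.mem_Icc.mpr ⟨le_refl 0, hT⟩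
  have key : ENNReal.ofReal (3/2) ≤ eVariationOn f (Set.Icc 0 T) := by
    rcases le_total a b with hab | hba
    · have := evar_lower_bound f (Set.Icc 0 T) 0 a b h0mem ha hb ha.1 hab
      calc ENNReal.ofReal (3/2)
          = edist (f a) (f 0) + edist (f b) (f a) := by
            rw [hfa, hfb, h0, edist_dist, edist_dist, Real.dist_eq, Real.dist_eq,
              ← ENNReal.ofReal_add (by positivity) (by positivity)]
            norm_num [abs_of_nonneg]
        _ ≤ _ := this
    · have := evar_lower_bound f (Set.Icc 0 T) 0 b a h0mem hb ha hb.1 hba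
      calc ENNReal.ofReal (3/2)
          = edist (f b) (f 0) + edist (f a) (f b) := by
            rw [hfa, hfb, h0, edist_dist, edist_dist, Real.dist_eq, Real.dist_eq,
              ← ENNReal.ofReal_add (by positivity) (by positivity)]
            norm_num [abs_of_nonneg]
        _ ≤ _ := this
  exact absurd (lt_of_le_of_lt key hvar) (lt_irrefl _)
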